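/- arXiv:2310.06564 — 5 statements merged into one kernel-verified Lean document; each statement's English description precedes it below -/
import Mathlib

section
/- Let η, ρ, κ, ω ∈ ℝ with ρ > 0, and define μ(t) = η + 2ρ·tanh(ω(t−κ)) and σ(t) = √2·ρ·sech(ω(t−κ)). Then σ(t) > 0 for all t, and μ and σ satisfy the geodesic equations of the Gaussian Fisher–Rao metric: μ'' = 2μ'σ'/σ and σ'' = (2(σ')² − (μ')²)/(2σ) for all t ∈ ℝ. -/
open Real

/-- The curves μ(t) = η + 2ρ tanh(ω(t−κ)), σ(t) = √2 ρ sech(ω(t−κ)) with ρ > 0 satisfy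
σ > 0 and the geodesic equations of the Gaussian Fisher–Rao metric. -/
theorem gaussian_geodesic_solution (η ρ κ ω : ℝ) (hρ : 0 < ρ)
    (μ σ : ℝ → ℝ)
    (hμ : ∀ t, μ t = η + 2 * ρ * Real.tanh (ω * (t - κ)))
    (hσ : ∀ t, σ t = Real.sqrt 2 * ρ * (Real.cosh (ω * (t - κ)))⁻¹) :
    (∀ t, 0 < σ t) ∧
    (∀ t : ℝ, deriv (deriv μ) t = 2 * deriv μ t * deriv σ t / σ t) ∧
    (∀ t : ℝ, deriv (deriv σ) t = (2 * (deriv σ t) ^ 2 - (deriv μ t) ^ 2) / (2 * σ t)) := by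
  have hc : ∀ x : ℝ, (0:ℝ) < Real.cosh x := Real.cosh_pos
  have hcne : ∀ x : ℝ, Real.cosh x ≠ 0 := fun x => (hc x).ne'
  have hU : ∀ t : ℝ, HasDerivAt (fun t => ω * (t - κ)) ω t := by
    intro t
    simpa using ((hasDerivAt_id t).sub_const κ).const_mul ω
  have hid : ∀ x : ℝ, Real.cosh x ^ 2 - Real.sinh x ^ 2 = 1 := Real.cosh_sq_sub_sinh_sq
  -- first derivatives
  set D1 : ℝ → ℝ := fun t => 2 * ρ * ω * ((Real.cosh (ω * (t - κ))) ^ 2)⁻¹ with hD1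
  set D2 : ℝ → ℝ := fun t =>
    -(Real.sqrt 2 * ρ * ω) * Real.sinh (ω * (t - κ)) * ((Real.cosh (ω * (t - κ))) ^ 2)⁻¹ with hD2
  have hμfun : μ = fun t => η + 2 * ρ * (Real.sinh (ω * (t - κ)) / Real.cosh (ω * (t - κ))) := by
    funext t; rw [hμ, Real.tanh_eq_sinh_div_cosh]
  have hσfun : σ = fun t => Real.sqrt 2 * ρ * (Real.cosh (ω * (t - κ)))⁻¹ := funext hσ
  have hμD : ∀ t : ℝ, HasDerivAt μ (D1 t) t := by
    intro t
    rw [hμfun]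
    have hs : HasDerivAt (fun t => Real.sinh (ω * (t - κ))) (Real.cosh (ω * (t - κ)) * ω) t :=
      (Real.hasDerivAt_sinh _).comp t (hU t)
    have hch : HasDerivAt (fun t => Real.cosh (ω * (t - κ))) (Real.sinh (ω * (t - κ)) * ω) t :=
      (Real.hasDerivAt_cosh _).comp t (hU t)
    have h := ((hs.div hch (hcne _)).const_mul (2 * ρ)).const_add η
    have k : Real.cosh (ω * (t - κ)) * ω * Real.cosh (ω * (t - κ)) -
        Real.sinh (ω * (t - κ)) * (Real.sinh (ω * (t - κ)) * ω) = ω := by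
      linear_combination ω * hid (ω * (t - κ))
    refine h.congr_deriv (Eq.symm ?_)
    rw [hD1, k]
    field_simp
  have hσD : ∀ t : ℝ, HasDerivAt σ (D2 t) t := by
    intro t
    rw [hσfun]
    have hch : HasDerivAt (fun t => Real.cosh (ω * (t - κ))) (Real.sinh (ω * (t - κ)) * ω) t :=
      (Real.hasDerivAt_cosh _).comp t (hU t)
    have h := (hch.inv (hcne _)).const_mul (Real.sqrt 2 * ρ)
    refine h.congr_deriv (Eq.symm ?_)
    rw [hD2]
    field_simp
  have hdμ : deriv μ = D1 := funext fun t => (hμD t).deriv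
  have hdσ : deriv σ = D2 := funext fun t => (hσD t).deriv
  -- second derivatives
  have hD1D : ∀ t : ℝ, HasDerivAt D1
      (-(4 * ρ * ω ^ 2) * Real.sinh (ω * (t - κ)) * ((Real.cosh (ω * (t - κ))) ^ 3)⁻¹) t := by
    intro t
    have hch : HasDerivAt (fun t => Real.cosh (ω * (t - κ))) (Real.sinh (ω * (t - κ)) * ω) t :=
      (Real.hasDerivAt_cosh _).comp t (hU t)
    have hsq : HasDerivAt (fun t => (Real.cosh (ω * (t - κ))) ^ 2)
        (2 * Real.cosh (ω * (t - κ)) ^ 1 * (Real.sinh (ω * (t - κ)) * ω)) t := by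
      simpa using hch.fun_pow 2
    have h := (hsq.inv (pow_ne_zero 2 (hcne _))).const_mul (2 * ρ * ω)
    refine h.congr_deriv (Eq.symm ?_)
    field_simp
    ring
  have hD2D : ∀ t : ℝ, HasDerivAt D2
      (Real.sqrt 2 * ρ * ω ^ 2 * (2 * Real.sinh (ω * (t - κ)) ^ 2 - Real.cosh (ω * (t - κ)) ^ 2) *
        ((Real.cosh (ω * (t - κ))) ^ 3)⁻¹) t := by
    intro t
    have hs : HasDerivAt (fun t => Real.sinh (ω * (t - κ))) (Real.cosh (ω * (t - κ)) * ω) t :=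
      (Real.hasDerivAt_sinh _).comp t (hU t)
    have hch : HasDerivAt (fun t => Real.cosh (ω * (t - κ))) (Real.sinh (ω * (t - κ)) * ω) t :=
      (Real.hasDerivAt_cosh _).comp t (hU t)
    have hsq : HasDerivAt (fun t => (Real.cosh (ω * (t - κ))) ^ 2)
        (2 * Real.cosh (ω * (t - κ)) ^ 1 * (Real.sinh (ω * (t - κ)) * ω)) t := by
      simpa using hch.fun_pow 2
    have h := ((hs.div hsq (pow_ne_zero 2 (hcne _))).const_mul (-(Real.sqrt 2 * ρ * ω)))
    have heq : D2 = fun t => -(Real.sqrt 2 * ρ * ω) *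
        (Real.sinh (ω * (t - κ)) / (Real.cosh (ω * (t - κ))) ^ 2) := by
      funext t; rw [hD2]; ring
    rw [heq]
    refine h.congr_deriv (Eq.symm ?_)
    field_simp
    ring
  have h2 : Real.sqrt 2 ^ 2 = 2 := Real.sq_sqrt (by norm_num)
  refine ⟨?_, ?_, ?_⟩
  · intro t
    rw [hσ]
    positivity
  · intro t
    rw [hdμ, hdσ, (hD1D t).deriv, hσ, hD1, hD2]
    have hc0 := hcne (ω * (t - κ))
    have hs0 : Real.sqrt 2 ≠ 0 := by positivity
    field_simp
    ring
  · intro t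
    rw [hdσ, hdμ, (hD2D t).deriv, hσ, hD1, hD2]
    have hc0 := hcne (ω * (t - κ))
    have hs0 : Real.sqrt 2 ≠ 0 := by positivity
    field_simp
    linear_combination (ω ^ 2 *
        (Real.sinh (ω * (t - κ)) ^ 2 - Real.cosh (ω * (t - κ)) ^ 2)) * h2 -
      2 * ω ^ 2 * hid (ω * (t - κ))
end

section
/- Let ρ ≠ 0, ω ≠ 0, κ ∈ ℝ, q ∈ ℝ, and define s(t) = 2ρ²·sech²(ω(t−κ)). Then q − s'(t) > 0 for all t ∈ ℝ if and only if q > 8ρ²|ω|/(3√3). -/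
open Real

lemma kalman_aux_deriv (ρ ω κ : ℝ) (s : ℝ → ℝ)
    (hs : ∀ t, s t = 2 * ρ ^ 2 * ((Real.cosh (ω * (t - κ)))⁻¹) ^ 2) (t : ℝ) :
    deriv s t = -4 * ρ ^ 2 * ω * Real.sinh (ω * (t - κ)) / (Real.cosh (ω * (t - κ))) ^ 3 := by
  have h1 : HasDerivAt (fun t : ℝ => ω * (t - κ)) ω t := by
    simpa using ((hasDerivAt_id t).sub_const κ).const_mul ω
  have h2 : HasDerivAt (fun t : ℝ => Real.cosh (ω * (t - κ)))
      (Real.sinh (ω * (t - κ)) * ω) t := (Real.hasDerivAt_cosh _).comp t h1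
  have h3 := h2.pow 2
  have hc : Real.cosh (ω * (t - κ)) ≠ 0 := (Real.cosh_pos _).ne'
  have h4 := h3.inv (pow_ne_zero 2 hc)
  have h5 := h4.const_mul (2 * ρ ^ 2)
  have h6 : HasDerivAt s
      (2 * ρ ^ 2 * (-((2 : ℕ) * Real.cosh (ω * (t - κ)) ^ (2 - 1) *
        (Real.sinh (ω * (t - κ)) * ω)) / (Real.cosh (ω * (t - κ)) ^ 2) ^ 2)) t := by
    convert h5 using 1
    · rfl
    · rfl
    funext x
    rw [hs x]
    rw [inv_pow]
    · rfl
    · rfl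
  rw [h6.deriv]
  field_simp
  ring

lemma kalman_aux_bound (x : ℝ) :
    |Real.sinh x / Real.cosh x ^ 3| ≤ 2 / (3 * Real.sqrt 3) := by
  have hc : 0 < Real.cosh x := Real.cosh_pos x
  have hs3 : Real.sqrt 3 ^ 2 = 3 := Real.sq_sqrt (by norm_num)
  have hs3' : (0:ℝ) < Real.sqrt 3 := Real.sqrt_pos.mpr (by norm_num)
  have hkey : 3 * Real.sqrt 3 * |Real.sinh x| ≤ 2 * Real.cosh x ^ 3 := by
    have habs : |Real.sinh x| ^ 2 = Real.sinh x ^ 2 := sq_abs _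
    have hcs : Real.cosh x ^ 2 = Real.sinh x ^ 2 + 1 := Real.cosh_sq x
    have ha : (0:ℝ) ≤ |Real.sinh x| := abs_nonneg _
    have hc6 : Real.cosh x ^ 6 = (Real.sinh x ^ 2 + 1) ^ 3 := by
      rw [show (6:ℕ) = 2*3 from rfl, pow_mul, hcs]
    have hB : 0 < 2 * Real.cosh x ^ 3 + 3 * Real.sqrt 3 * |Real.sinh x| := by positivity
    have hprod : (2 * Real.cosh x ^ 3 - 3 * Real.sqrt 3 * |Real.sinh x|) *
        (2 * Real.cosh x ^ 3 + 3 * Real.sqrt 3 * |Real.sinh x|)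
        = (2 * Real.sinh x ^ 2 - 1) ^ 2 * (Real.sinh x ^ 2 + 4) := by
      linear_combination 4 * hc6 - 9 * |Real.sinh x| ^ 2 * hs3 - 27 * habs
    have hge : 0 ≤ (2 * Real.cosh x ^ 3 - 3 * Real.sqrt 3 * |Real.sinh x|) *
        (2 * Real.cosh x ^ 3 + 3 * Real.sqrt 3 * |Real.sinh x|) := by
      rw [hprod]; positivity
    nlinarith [hge, hB]
  rw [abs_div, abs_pow, abs_of_pos hc, div_le_div_iff₀ (pow_pos hc 3) (by positivity)]
  nlinarith [pow_pos hc 3]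

lemma kalman_aux_val :
    Real.sinh (Real.arsinh (Real.sqrt (1/2))) /
      Real.cosh (Real.arsinh (Real.sqrt (1/2))) ^ 3 = 2 / (3 * Real.sqrt 3) := by
  rw [Real.sinh_arsinh, Real.cosh_arsinh]
  have h12 : Real.sqrt (1/2) ^ 2 = 1/2 := Real.sq_sqrt (by norm_num)
  have h32 : (1 : ℝ) + Real.sqrt (1/2) ^ 2 = 3/2 := by rw [h12]; norm_num
  rw [h32]
  have hsplit : Real.sqrt (3/2) = Real.sqrt 3 * Real.sqrt (1/2) := by
    rw [← Real.sqrt_mul (by norm_num : (0:ℝ) ≤ 3)]; norm_num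
  have h3 : Real.sqrt 3 ^ 2 = 3 := Real.sq_sqrt (by norm_num)
  have h32sq : Real.sqrt (3/2) ^ 2 = 3/2 := Real.sq_sqrt (by norm_num)
  have hpos2 : (0:ℝ) < Real.sqrt (1/2) := Real.sqrt_pos.mpr (by norm_num)
  have hpos3 : (0:ℝ) < Real.sqrt 3 := Real.sqrt_pos.mpr (by norm_num)
  have hcube : Real.sqrt (3/2) ^ 3 = (3/2) * (Real.sqrt 3 * Real.sqrt (1/2)) := by
    have : Real.sqrt (3/2) ^ 3 = Real.sqrt (3/2) ^ 2 * Real.sqrt (3/2) := by ring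
    rw [this, h32sq, hsplit]
  rw [hcube]
  field_simp

/-- For s(t) = 2ρ²·sech²(ω(t−κ)) with ρ ≠ 0, ω ≠ 0: q − s'(t) > 0 for all t iff
q > 8ρ²|ω|/(3√3). -/
theorem kalman_geodesic_controller_wellposed (ρ ω κ q : ℝ) (hρ : ρ ≠ 0) (hω : ω ≠ 0)
    (s : ℝ → ℝ)
    (hs : ∀ t, s t = 2 * ρ ^ 2 * ((Real.cosh (ω * (t - κ)))⁻¹) ^ 2) :
    (∀ t : ℝ, 0 < q - deriv s t) ↔ q > 8 * ρ ^ 2 * |ω| / (3 * Real.sqrt 3) := by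
  have hder := kalman_aux_deriv ρ ω κ s hs
  set x₀ := Real.arsinh (Real.sqrt (1/2)) with hx₀
  have hval := kalman_aux_val
  have hs3' : (0:ℝ) < Real.sqrt 3 := Real.sqrt_pos.mpr (by norm_num)
  constructor
  · intro H
    have ht1 : ω * ((κ + x₀ / ω) - κ) = x₀ := by field_simp; ring
    have ht2 : ω * ((κ - x₀ / ω) - κ) = -x₀ := by field_simp; ring
    have H1 := H (κ + x₀ / ω)
    have H2 := H (κ - x₀ / ω)
    rw [hder, ht1] at H1
    rw [hder, ht2] at H2
    rw [Real.sinh_neg, Real.cosh_neg] at H2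
    have e1 : -4 * ρ ^ 2 * ω * Real.sinh x₀ / Real.cosh x₀ ^ 3
        = -4 * ρ ^ 2 * ω * (Real.sinh x₀ / Real.cosh x₀ ^ 3) := by ring
    have e2 : -4 * ρ ^ 2 * ω * -Real.sinh x₀ / Real.cosh x₀ ^ 3
        = 4 * ρ ^ 2 * ω * (Real.sinh x₀ / Real.cosh x₀ ^ 3) := by ring
    rw [e1, hval] at H1
    rw [e2, hval] at H2
    rcases abs_cases ω with ⟨habs, _⟩ | ⟨habs, _⟩
    · rw [habs]
      have : 8 * ρ ^ 2 * ω / (3 * Real.sqrt 3) = 4 * ρ ^ 2 * ω * (2 / (3 * Real.sqrt 3)) := by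
        ring
      linarith [this ▸ H2]
    · rw [habs]
      have : 8 * ρ ^ 2 * (-ω) / (3 * Real.sqrt 3) = -(-4) * ρ ^ 2 * ω * (2 / (3 * Real.sqrt 3)) * (-1) := by
        ring
      rw [this]
      nlinarith [H1]
  · intro hq t
    rw [hder t]
    set u := ω * (t - κ)
    have hb := kalman_aux_bound u
    have h1 : -4 * ρ ^ 2 * ω * Real.sinh u / Real.cosh u ^ 3
        = (-4 * ρ ^ 2 * ω) * (Real.sinh u / Real.cosh u ^ 3) := by ring
    have h2 : (-4 * ρ ^ 2 * ω) * (Real.sinh u / Real.cosh u ^ 3)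
        ≤ |(-4 * ρ ^ 2 * ω) * (Real.sinh u / Real.cosh u ^ 3)| := le_abs_self _
    have h3 : |(-4 * ρ ^ 2 * ω) * (Real.sinh u / Real.cosh u ^ 3)|
        = (4 * ρ ^ 2 * |ω|) * |Real.sinh u / Real.cosh u ^ 3| := by
      rw [abs_mul]
      congr 1
      rw [show (-4*ρ^2*ω : ℝ) = -(4*ρ^2*ω) by ring, abs_neg, abs_mul, abs_mul,
        abs_of_nonneg (sq_nonneg ρ)]
      norm_num
    have h4 : (4 * ρ ^ 2 * |ω|) * |Real.sinh u / Real.cosh u ^ 3|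
        ≤ (4 * ρ ^ 2 * |ω|) * (2 / (3 * Real.sqrt 3)) :=
      mul_le_mul_of_nonneg_left hb (by positivity)
    have h5 : (4 * ρ ^ 2 * |ω|) * (2 / (3 * Real.sqrt 3))
        = 8 * ρ ^ 2 * |ω| / (3 * Real.sqrt 3) := by ring
    linarith [h1 ▸ (h2.trans (h3 ▸ (h4.trans_eq h5)))]
end

section
/- Fix real numbers μ, u, q, λ and s > 0, ν ≠ 0. Define H(z, r) = s²/(4r²) + s(z−μ)²/(2r²) + λ(u + (s/r)(z−μ)) + ν(q − s²/r) for r ≠ 0. Then at z* = μ − λ/(2ν) and r* = 1/(2ν), both partial derivatives vanish: ∂H/∂z(z*, r*) = 0 and ∂H/∂r(z*, r*) = 0. -/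
/-- The Pontryagin Hamiltonian of the corrector control problem for the Kalman–Bucy
filter is stationary in both controls at z* = μ − λ/(2ν), r* = 1/(2ν). -/
theorem kalman_corrector_stationary_controls (μ u q lam s ν : ℝ) (hs : 0 < s) (hν : ν ≠ 0)
    (H : ℝ → ℝ → ℝ)
    (hH : ∀ z r, H z r = s ^ 2 / (4 * r ^ 2) + s * (z - μ) ^ 2 / (2 * r ^ 2)
      + lam * (u + (s / r) * (z - μ)) + ν * (q - s ^ 2 / r)) :
    deriv (fun z => H z (1 / (2 * ν))) (μ - lam / (2 * ν)) = 0 ∧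
    deriv (fun r => H (μ - lam / (2 * ν)) r) (1 / (2 * ν)) = 0 := by
  set r0 : ℝ := 1 / (2 * ν) with hr0
  set z0 : ℝ := μ - lam / (2 * ν) with hz0
  have hr0ne : r0 ≠ 0 := by
    simp [hr0]
    exact hν
  have hznu : z0 - μ = -(lam * r0) := by rw [hz0, hr0]; ring
  constructor
  · have hd : HasDerivAt (fun z : ℝ => z - μ) 1 z0 := (hasDerivAt_id z0).sub_const μ
    have hsq := hd.pow 2
    have h1 := (((((hsq.const_mul s).div_const (2 * r0 ^ 2)).const_add
        (s ^ 2 / (4 * r0 ^ 2))).add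
        (((hd.const_mul (s / r0)).const_add u).const_mul lam)).add_const (ν * (q - s ^ 2 / r0)))
    simp only [hH]
    rw [HasDerivAt.deriv (f := fun z => s ^ 2 / (4 * r0 ^ 2) + s * (z - μ) ^ 2 / (2 * r0 ^ 2) + lam * (u + s / r0 * (z - μ)) + ν * (q - s ^ 2 / r0)) h1, hznu]
    field_simp
    ring
  · have hdr : HasDerivAt (fun r : ℝ => r) 1 r0 := hasDerivAt_id r0
    have hdr2 := hdr.pow 2
    have hden1 : (4 : ℝ) * r0 ^ 2 ≠ 0 := by positivity
    have hden2 : (2 : ℝ) * r0 ^ 2 ≠ 0 := by positivity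
    have h1 := (hasDerivAt_const r0 (s ^ 2)).div (hdr2.const_mul 4) hden1
    have h2 := (hasDerivAt_const r0 (s * (z0 - μ) ^ 2)).div (hdr2.const_mul 2) hden2
    have h3 := ((((hasDerivAt_const r0 s).div hdr hr0ne).mul_const (z0 - μ)).const_add u).const_mul lam
    have h4 := (((hasDerivAt_const r0 (s ^ 2)).div hdr hr0ne).const_sub q).const_mul ν
    have hsum := ((h1.add h2).add h3).add h4
    simp only [hH]
    rw [HasDerivAt.deriv (f := fun r => s ^ 2 / (4 * r ^ 2) + s * (z0 - μ) ^ 2 / (2 * r ^ 2) + lam * (u + s / r * (z0 - μ)) + ν * (q - s ^ 2 / r)) hsum, hznu, hr0]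
    simp only [Pi.pow_apply, show (2:ℕ) - 1 = 1 from rfl, pow_one, Nat.cast_ofNat]
    field_simp
    ring
end

section
/- Let q, Λ ∈ ℝ and let s, ν : ℝ → ℝ be differentiable functions satisfying s'(t) = q − 2ν(t)s(t)² and ν'(t) = Λ²/2 + 2ν(t)²s(t) for all t. Then the function 𝓗(t) = Λ²s(t)/2 − q·ν(t) + ν(t)²s(t)² is constant in t. -/
/-- Along solutions of s' = q − 2νs², ν' = Λ²/2 + 2ν²s, the mechanical Hamiltonian
𝓗 = Λ²s/2 − qν + ν²s² is a first integral (constant in time). -/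
theorem kalman_corrector_first_integral (q Λ : ℝ) (s ν : ℝ → ℝ)
    (hs : ∀ t, HasDerivAt s (q - 2 * ν t * (s t) ^ 2) t)
    (hν : ∀ t, HasDerivAt ν (Λ ^ 2 / 2 + 2 * (ν t) ^ 2 * s t) t) :
    ∀ t₁ t₂ : ℝ,
      Λ ^ 2 * s t₁ / 2 - q * ν t₁ + (ν t₁) ^ 2 * (s t₁) ^ 2
        = Λ ^ 2 * s t₂ / 2 - q * ν t₂ + (ν t₂) ^ 2 * (s t₂) ^ 2 := by
  have key : ∀ t, HasDerivAt
      (fun t => Λ ^ 2 * s t / 2 - q * ν t + (ν t) ^ 2 * (s t) ^ 2) 0 t := by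
    intro t
    have h :=
      ((((hs t).const_mul (Λ ^ 2)).div_const 2).sub ((hν t).const_mul q)).add
        ((((hν t).pow 2).mul ((hs t).pow 2)))
    refine h.congr_deriv ?_
    simp only [Pi.pow_apply]
    ring
  intro t₁ t₂
  have : ∀ a b, (fun t => Λ ^ 2 * s t / 2 - q * ν t + (ν t) ^ 2 * (s t) ^ 2) a
      = (fun t => Λ ^ 2 * s t / 2 - q * ν t + (ν t) ^ 2 * (s t) ^ 2) b := by
    intro a b
    exact (is_const_of_deriv_eq_zero (fun t => (key t).differentiableAt)
      (fun t => (key t).deriv) a b)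
  exact this t₁ t₂
end

section
/- Let n ≥ 2 be an integer and c₁, c₂ ∈ ℝ. Let I ⊆ ℝ be an open interval on which sin((1/2)√(n−1)(c₁t + c₂)) ≠ 0 and cos((1/2)√(n−1)(c₁t + c₂)) ≠ 0. Then q(t) = log((n−1)·tan²((1/2)√(n−1)(c₁t + c₂))) is twice differentiable on I and satisfies the Euler–Lagrange equation q''(t) = (e^{q(t)} + 1 − n)·q'(t)² / (2((n−1) + e^{q(t)})) for all t ∈ I. -/
open Real Set

/-- The closed-form path q(t) = log((n−1)·tan²((1/2)√(n−1)(c₁t+c₂))) is twice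
differentiable and satisfies the Euler–Lagrange equation
q'' = (e^q + 1 − n)(q')²/(2((n−1) + e^q)) on any open interval where the relevant
sine and cosine do not vanish. -/
theorem boltzmann_geodesic_euler_lagrange (n : ℕ) (hn : 2 ≤ n) (c₁ c₂ a b : ℝ)
    (hsin : ∀ t ∈ Set.Ioo a b,
      Real.sin ((1 / 2) * Real.sqrt ((n : ℝ) - 1) * (c₁ * t + c₂)) ≠ 0)
    (hcos : ∀ t ∈ Set.Ioo a b,
      Real.cos ((1 / 2) * Real.sqrt ((n : ℝ) - 1) * (c₁ * t + c₂)) ≠ 0)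
    (q : ℝ → ℝ)
    (hq : ∀ t, q t = Real.log (((n : ℝ) - 1) *
      (Real.tan ((1 / 2) * Real.sqrt ((n : ℝ) - 1) * (c₁ * t + c₂))) ^ 2)) :
    DifferentiableOn ℝ q (Set.Ioo a b) ∧
    DifferentiableOn ℝ (deriv q) (Set.Ioo a b) ∧
    ∀ t ∈ Set.Ioo a b,
      deriv (deriv q) t
        = (Real.exp (q t) + 1 - n) * (deriv q t) ^ 2
            / (2 * (((n : ℝ) - 1) + Real.exp (q t))) := by
  have hnr : (0:ℝ) < (n:ℝ) - 1 := by
    have : (2:ℝ) ≤ n := by exact_mod_cast hn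
    linarith
  set nr : ℝ := (n:ℝ) - 1 with hnr_def
  set k : ℝ := (1/2) * Real.sqrt nr with hk_def
  set θ : ℝ → ℝ := fun t => (1/2) * Real.sqrt nr * (c₁ * t + c₂) with hθ_def
  have hθd : ∀ t, HasDerivAt θ (k * c₁) t := by
    intro t
    have h1 : HasDerivAt (fun t => c₁ * t + c₂) c₁ t := by
      simpa using ((hasDerivAt_id t).const_mul c₁).add_const c₂
    simpa [hθ_def, hk_def, mul_assoc] using h1.const_mul k
  set f : ℝ → ℝ := fun t => 2 * (k * c₁) / (Real.sin (θ t) * Real.cos (θ t)) with hf_def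
  -- first derivative
  have hq' : ∀ t ∈ Set.Ioo a b, HasDerivAt q (f t) t := by
    intro t ht
    have hs := hsin t ht
    have hc := hcos t ht
    have htan : HasDerivAt (fun t => Real.tan (θ t)) ((1 / Real.cos (θ t) ^ 2) * (k * c₁)) t :=
      (Real.hasDerivAt_tan (x := θ t) hc).comp t (hθd t)
    have hu : HasDerivAt (fun t => nr * Real.tan (θ t) ^ 2)
        (nr * ((2:ℕ) * Real.tan (θ t) ^ 1 * ((1 / Real.cos (θ t) ^ 2) * (k * c₁)))) t :=
      (htan.pow 2).const_mul nr
    have htanne : Real.tan (θ t) ≠ 0 := by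
      rw [Real.tan_eq_sin_div_cos]
      exact div_ne_zero hs hc
    have hune : nr * Real.tan (θ t) ^ 2 ≠ 0 :=
      mul_ne_zero hnr.ne' (pow_ne_zero _ htanne)
    have hlog := hu.log hune
    have hqeq : q = fun t => Real.log (nr * Real.tan (θ t) ^ 2) := by
      funext s; rw [hq s]
    rw [hqeq]
    convert hlog using 1
    rw [Real.tan_eq_sin_div_cos]
    field_simp [hf_def]
    ring
  have hderivq : ∀ t ∈ Set.Ioo a b, deriv q t = f t := fun t ht => (hq' t ht).deriv
  -- second derivative of f
  set g : ℝ → ℝ := fun t => (0 * (Real.sin (θ t) * Real.cos (θ t)) - 2 * (k * c₁) *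
      (Real.cos (θ t) * (k * c₁) * Real.cos (θ t) +
       Real.sin (θ t) * (-Real.sin (θ t) * (k * c₁)))) /
      (Real.sin (θ t) * Real.cos (θ t)) ^ 2 with hg_def
  have hf' : ∀ t ∈ Set.Ioo a b, HasDerivAt f (g t) t := by
    intro t ht
    have hs := hsin t ht
    have hc := hcos t ht
    have hsin' : HasDerivAt (fun t => Real.sin (θ t)) (Real.cos (θ t) * (k * c₁)) t :=
      (Real.hasDerivAt_sin _).comp t (hθd t)
    have hcos' : HasDerivAt (fun t => Real.cos (θ t)) (-Real.sin (θ t) * (k * c₁)) t :=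
      (Real.hasDerivAt_cos _).comp t (hθd t)
    have hv := hsin'.mul hcos'
    have hvne : Real.sin (θ t) * Real.cos (θ t) ≠ 0 := mul_ne_zero hs hc
    exact (hasDerivAt_const t (2 * (k * c₁))).div hv hvne
  -- deriv q eventually equals f near points of Ioo
  have hev : ∀ t ∈ Set.Ioo a b, deriv q =ᶠ[nhds t] f := by
    intro t ht
    filter_upwards [isOpen_Ioo.mem_nhds ht] with s hs using hderivq s hs
  refine ⟨fun t ht => ((hq' t ht).differentiableAt).differentiableWithinAt, ?_, ?_⟩
  · intro t ht
    have : DifferentiableAt ℝ f t := (hf' t ht).differentiableAt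
    exact ((hev t ht).differentiableAt_iff.mpr this).differentiableWithinAt
  · intro t ht
    have hs := hsin t ht
    have hc := hcos t ht
    have h2 : deriv (deriv q) t = g t := by
      rw [Filter.EventuallyEq.deriv_eq (hev t ht)]
      exact (hf' t ht).deriv
    rw [h2, hderivq t ht, hq t]
    have htanne : Real.tan (θ t) ≠ 0 := by
      rw [Real.tan_eq_sin_div_cos]; exact div_ne_zero hs hc
    have hpos : 0 < nr * Real.tan (θ t) ^ 2 :=
      mul_pos hnr (by positivity)
    have hexp : Real.exp (Real.log (nr * Real.tan (θ t) ^ 2)) = nr * Real.tan (θ t) ^ 2 :=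
      Real.exp_log hpos
    have harg : (1 / 2) * Real.sqrt ((n:ℝ) - 1) * (c₁ * t + c₂) = θ t := rfl
    rw [harg, hexp, hg_def, hf_def, Real.tan_eq_sin_div_cos]
    have hpy : Real.sin (θ t) ^ 2 + Real.cos (θ t) ^ 2 = 1 := Real.sin_sq_add_cos_sq _
    have hden : nr + nr * (Real.sin (θ t) / Real.cos (θ t)) ^ 2 ≠ 0 := by
      have : 0 < nr + nr * (Real.sin (θ t) / Real.cos (θ t)) ^ 2 := by positivity
      exact this.ne'
    have hcast : (n:ℝ) = nr + 1 := by rw [hnr_def]; ring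
    rw [hcast]
    simp only []
    have hs' : Real.sin (θ t) ≠ 0 := hs
    have hc' : Real.cos (θ t) ≠ 0 := hc
    field_simp
    linear_combination (Real.sqrt nr ^ 2 * c₁ ^ 2 * ((n:ℝ) - 1) *
      ((Real.sin (θ t)^2 - Real.cos (θ t)^2) / 2)) * hpy
end
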